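/- With F = GF(2^{2m}) ⊃ L = GF(2^m), σ = 2^s, and C_1, C_2 ∈ F, the following are equivalent: (a) T(C_1 x x̄^σ + C_2 x^{σ+1}) ≠ 0 for all nonzero x ∈ F; (b) the polynomial P(X) = C_2 X^{σ+1} + C̄_1 X^σ + C_1 X + C̄_2 has no root in F of norm 1 over L. -/

import Mathlib

theorem stmt_4 (m s : ℕ) (hm : 1 ≤ m)
    (F : Type) [Field F] [Fintype F] (hF : Fintype.card F = 2 ^ (2 * m))
    (C1 C2 : F)
    (T : F → F) (hT : ∀ x, T x = x + x ^ (2 ^ m)) :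
    (∀ x : F, x ≠ 0 →
        T (C1 * x * (x ^ (2 ^ m)) ^ (2 ^ s) + C2 * x ^ (2 ^ s + 1)) ≠ 0) ↔
      ¬ ∃ x : F, x ^ (2 ^ m + 1) = 1 ∧
        C2 * x ^ (2 ^ s + 1) + C1 ^ (2 ^ m) * x ^ (2 ^ s) + C1 * x + C2 ^ (2 ^ m) = 0 := by
  classical
  -- characteristic 2
  have hchar2 : ringChar F = 2 := by
    obtain ⟨n, hprime, hcard⟩ := FiniteField.card F (ringChar F)
    have hdvd : ringChar F ∣ 2 ^ (2 * m) := by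
      rw [hF] at hcard
      exact hcard ▸ dvd_pow_self _ n.ne_zero
    exact (Nat.prime_dvd_prime_iff_eq hprime Nat.prime_two).mp
      (hprime.dvd_of_dvd_pow hdvd)
  haveI : CharP F 2 := hchar2 ▸ ringChar.charP F
  haveI : Fact (Nat.Prime 2) := ⟨Nat.prime_two⟩
  have frob : ∀ a b : F, (a + b) ^ (2 ^ m) = a ^ (2 ^ m) + b ^ (2 ^ m) := fun a b =>
    add_pow_char_pow a b 2 m
  have bb : ∀ x : F, (x ^ (2 ^ m)) ^ (2 ^ m) = x := by
    intro x
    have h1 : 2 ^ m * 2 ^ m = 2 ^ (2 * m) := by rw [← pow_add, two_mul]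
    rw [← pow_mul, h1, ← hF, FiniteField.pow_card]
  -- key identity
  have key : ∀ x : F, x ≠ 0 →
      T (C1 * x * (x ^ (2 ^ m)) ^ (2 ^ s) + C2 * x ^ (2 ^ s + 1)) =
      (x ^ (2 ^ m)) ^ (2 ^ s + 1) *
        (C2 * (x * (x ^ (2 ^ m))⁻¹) ^ (2 ^ s + 1) +
          C1 ^ (2 ^ m) * (x * (x ^ (2 ^ m))⁻¹) ^ (2 ^ s) +
          C1 * (x * (x ^ (2 ^ m))⁻¹) + C2 ^ (2 ^ m)) := by
    intro x hx
    have hxq : x ^ (2 ^ m) ≠ 0 := pow_ne_zero _ hx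
    rw [hT, frob, mul_pow, mul_pow, mul_pow]
    rw [show ((x ^ 2 ^ m) ^ 2 ^ s) ^ 2 ^ m = x ^ 2 ^ s by
      rw [← pow_mul, mul_comm, pow_mul, bb]]
    rw [show (x ^ (2 ^ s + 1)) ^ 2 ^ m = (x ^ 2 ^ m) ^ (2 ^ s + 1) by
      rw [← pow_mul, mul_comm, pow_mul]]
    generalize C1 ^ (2 : ℕ) ^ m = D1
    generalize C2 ^ (2 : ℕ) ^ m = D2
    generalize hy : x ^ (2 : ℕ) ^ m = y at hxq ⊢
    generalize (2 : ℕ) ^ s = n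
    field_simp
    have hy1 : y * y⁻¹ = 1 := mul_inv_cancel₀ hxq
    have hyn : y ^ n * y⁻¹ ^ n = 1 := by rw [← mul_pow, hy1, one_pow]
    linear_combination (-(y * x * x ^ n * C2 * (y ^ n * y⁻¹ ^ n))) * hy1 +
      (-(y * x * x ^ n * C2) - y ^ 2 * x ^ n * D1) * hyn
  -- Hilbert 90
  have h90 : ∀ v : F, v ≠ 0 → v ^ (2 ^ m + 1) = 1 →
      ∃ x : F, x ≠ 0 ∧ x * (x ^ (2 ^ m))⁻¹ = v := by
    intro v hv0 hv1
    obtain ⟨g, hg⟩ := IsCyclic.exists_generator (α := Fˣ)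
    have horder : orderOf g = 2 ^ (2 * m) - 1 := by
      rw [orderOf_eq_card_of_forall_mem_zpowers hg, Nat.card_eq_fintype_card, Fintype.card_units, hF]
    set V : Fˣ := Units.mk0 v hv0 with hV
    obtain ⟨a, ha⟩ : ∃ a : ℕ, g ^ a = V⁻¹ := by
      have := hg V⁻¹
      rwa [← mem_powers_iff_mem_zpowers, Submonoid.mem_powers_iff] at this
    have hV1 : V ^ (2 ^ m + 1) = 1 := by
      ext
      push_cast [hV]
      exact hv1
    have hg1 : g ^ (a * (2 ^ m + 1)) = 1 := by
      rw [pow_mul, ha, inv_pow, hV1, inv_one]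
    have hdvd : (2 ^ (2 * m) - 1) ∣ a * (2 ^ m + 1) :=
      horder ▸ orderOf_dvd_of_pow_eq_one hg1
    have hfact : 2 ^ (2 * m) - 1 = (2 ^ m - 1) * (2 ^ m + 1) := by
      have h1 : (2 ^ m - 1) * (2 ^ m + 1) = 2 ^ m * (2 ^ m + 1) - (2 ^ m + 1) :=
        Nat.sub_one_mul _ _
      have h2 : 2 ^ m * (2 ^ m + 1) = 2 ^ (2 * m) + 2 ^ m := by
        rw [mul_add, mul_one, ← pow_add, two_mul]
      omega
    rw [hfact] at hdvd
    have hdvd2 : (2 ^ m - 1) ∣ a :=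
      (Nat.mul_dvd_mul_iff_right (Nat.succ_pos _)).mp hdvd
    obtain ⟨b, hb⟩ := hdvd2
    refine ⟨((g ^ b : Fˣ) : F), Units.ne_zero _, ?_⟩
    have hX : (g ^ b) ^ (2 ^ m - 1) = V⁻¹ := by
      rw [← pow_mul, mul_comm b, ← hb, ha]
    have hXq : (g ^ b) ^ (2 ^ m) = V⁻¹ * g ^ b := by
      have h1 : (1:ℕ) ≤ 2 ^ m := Nat.one_le_two_pow
      have : 2 ^ m = (2 ^ m - 1) + 1 := by omega
      rw [this, pow_succ, hX]
    have hXF : ((g ^ b : Fˣ) : F) ^ (2 ^ m) = v⁻¹ * ((g ^ b : Fˣ) : F) := by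
      have := congrArg (Units.val) hXq
      push_cast at this
      simpa [hV] using this
    rw [hXF]
    have hXne : ((g ^ b : Fˣ) : F) ≠ 0 := Units.ne_zero _
    field_simp
  constructor
  · rintro h ⟨v, hv1, hP⟩
    have hv0 : v ≠ 0 := by
      intro h0
      rw [h0, zero_pow (by positivity)] at hv1
      exact zero_ne_one hv1
    obtain ⟨x, hx0, hxv⟩ := h90 v hv0 hv1
    exact h x hx0 (by rw [key x hx0, hxv, hP, mul_zero])
  · intro h x hx hTz
    apply h
    have hxq : x ^ (2 ^ m) ≠ 0 := pow_ne_zero _ hx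
    refine ⟨x * (x ^ (2 ^ m))⁻¹, ?_, ?_⟩
    · have h1 : (x ^ (2 ^ m)) ^ (2 ^ m + 1) = x ^ (2 ^ m + 1) := by
        rw [pow_succ, bb, pow_succ, mul_comm]
      rw [mul_pow, inv_pow, h1]
      field_simp
    · have hk := key x hx
      rw [hTz] at hk
      have := (mul_eq_zero.mp hk.symm).resolve_left (pow_ne_zero _ hxq)
      exact this
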